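/- Contact analysis lemma, case α ∈ (0,1) (Lemma 3.1). Let d ≥ 1, α ∈ (0,1), m > 1, δ ≥ 0. Let u : [0,∞) × ℝ^d → [0,∞) be bounded, C¹ in t and C² in x, such that for v(t,·) := u(t,·)^{m−1} the integrals G₀(v(t,·))(x) and L(v(t,·))(x) converge absolutely at every point, and such that u satisfies pointwise ∂_t u = ∇_x u · G₀(v) + u L(v) + δ Δ_x u on (0,∞) × ℝ^d, where G₀(w)(x) = ∫_{ℝ^d} w(x+z) z ‖z‖^{−(d+α)} dz. Let U : (0,∞) × ℝ^d → [0,∞) be radially symmetric in x and non-increasing in ‖x‖, C² in (t,x) on (0,∞) × {x : ‖x‖ > 1}, and such that for V(t,·) := U(t,·)^{m−1} the integrals G₀(V(t_c,·))(x_c) and L(V(t_c,·))(x_c) below converge absolutely. Suppose u ≤ U on (0,t_c] × ℝ^d and u(t_c,x_c) = U(t_c,x_c) for some t_c > 0 and x_c with ‖x_c‖ > 1, and let γ > 0 satisfy γ ‖∇_x U(t_c,x_c)‖ ≤ U(t_c,x_c). Then at the point (t_c,x_c): ∂_t U ≤ ∇_x U · G₀(V) + U L(V) + δ Δ_x U +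 e, where, writing x̂_c = x_c/‖x_c‖ and I⁺_out(w) = ∫_{‖y‖ ≥ γ, y·x̂_c ≥ 0} w(x_c+y) (y·x̂_c) ‖y‖^{−(d+α)} dy, the error term is e = ‖∇_x U(t_c,x_c)‖ ( I⁺_out(V(t_c,·)) − I⁺_out(v(t_c,·)) ); moreover e ≥ 0. -/

import Mathlib

open MeasureTheory Metric Set

/-- The (unnormalized) singular integral `G₀(w)(x) = ∫ w(x+z) z ‖z‖^{−(d+α)} dz`,
representing `∇(−Δ)^{α/2−1} w` up to a positive constant (form valid for `α ∈ (0,1)`). -/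
noncomputable def fracGrad0 (d : ℕ) (α : ℝ) (w : EuclideanSpace ℝ (Fin d) → ℝ)
    (x : EuclideanSpace ℝ (Fin d)) : EuclideanSpace ℝ (Fin d) :=
  ∫ z, (w (x + z) * ‖z‖ ^ (-((d : ℝ) + α))) • z

/-- The (unnormalized) singular integral
`L(w)(x) = ∫ (w(x+z) + w(x−z) − 2 w(x)) ‖z‖^{−(d+α)} dz`,
representing `−(−Δ)^{α/2} w` up to a positive constant. -/
noncomputable def fracLap (d : ℕ) (α : ℝ) (w : EuclideanSpace ℝ (Fin d) → ℝ)
    (x : EuclideanSpace ℝ (Fin d)) : ℝ :=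
  ∫ z, (w (x + z) + w (x - z) - 2 * w x) * ‖z‖ ^ (-((d : ℝ) + α))

/-- The Laplacian of `f` at `x`: the trace of the second derivative of `f` at `x`,
computed in the standard orthonormal basis of `EuclideanSpace ℝ (Fin d)`. -/
noncomputable def lap (d : ℕ) (f : EuclideanSpace ℝ (Fin d) → ℝ)
    (x : EuclideanSpace ℝ (Fin d)) : ℝ :=
  ∑ i : Fin d, fderiv ℝ (fun y => fderiv ℝ f y (EuclideanSpace.single i 1)) x
    (EuclideanSpace.single i 1)

/-- The outer positive-half drift integral
`I⁺_out(w) = ∫_{‖y‖ ≥ γ, y·xh_c ≥ 0} w(x_c+y) (y·xh_c) ‖y‖^{−(d+α)} dy`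
(form valid for `α ∈ (0,1)`), where `xh_c = x_c/‖x_c‖`. -/
noncomputable def IoutPlus0 (d : ℕ) (α γ : ℝ) (xc : EuclideanSpace ℝ (Fin d))
    (w : EuclideanSpace ℝ (Fin d) → ℝ) : ℝ :=
  ∫ y in {y : EuclideanSpace ℝ (Fin d) |
      γ ≤ ‖y‖ ∧ 0 ≤ (inner ℝ y (‖xc‖⁻¹ • xc) : ℝ)},
    w (xc + y) * (inner ℝ y (‖xc‖⁻¹ • xc) : ℝ) * ‖y‖ ^ (-((d : ℝ) + α))

lemma deriv_nonpos_of_left_min {f : ℝ → ℝ} {a c : ℝ}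
    (hf : HasDerivAt f c a) (h : ∀ᶠ t in nhdsWithin a (Set.Iio a), f a ≤ f t) : c ≤ 0 := by
  have hs : Filter.Tendsto (slope f a) (nhdsWithin a (Set.Iio a)) (nhds c) :=
    (hasDerivAt_iff_tendsto_slope.1 hf).mono_left
      (nhdsWithin_mono a (fun t ht => ne_of_lt ht))
  refine le_of_tendsto hs ?_
  filter_upwards [h, self_mem_nhdsWithin] with t hft (ht : t < a)
  rw [slope_def_field]
  exact div_nonpos_of_nonneg_of_nonpos (by linarith) (by linarith)

lemma deriv_nonpos_of_right_max {f : ℝ → ℝ} {a c : ℝ}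
    (hf : HasDerivAt f c a) (h : ∀ᶠ t in nhdsWithin a (Set.Ioi a), f t ≤ f a) : c ≤ 0 := by
  have hs : Filter.Tendsto (slope f a) (nhdsWithin a (Set.Ioi a)) (nhds c) :=
    (hasDerivAt_iff_tendsto_slope.1 hf).mono_left
      (nhdsWithin_mono a (fun t ht => ne_of_gt ht))
  refine le_of_tendsto hs ?_
  filter_upwards [h, self_mem_nhdsWithin] with t hft (ht : a < t)
  rw [slope_def_field]
  exact div_nonpos_of_nonpos_of_nonneg (by linarith) (by linarith)

lemma second_deriv_nonneg_of_min {φ ψ : ℝ → ℝ} {ε c : ℝ} (hε : 0 < ε)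
    (hφ : ∀ t ∈ Set.Ioo (-ε) ε, HasDerivAt φ (ψ t) t)
    (hψ : HasDerivAt ψ c 0)
    (hmin : ∀ t ∈ Set.Ioo (-ε) ε, φ 0 ≤ φ t) : 0 ≤ c := by
  have h0 : (0:ℝ) ∈ Set.Ioo (-ε) ε := by constructor <;> linarith
  have hψ0 : ψ 0 = 0 := by
    have hloc : IsLocalMin φ 0 :=
      Filter.eventually_of_mem (Ioo_mem_nhds (by linarith) hε) hmin
    have h1 := hloc.deriv_eq_zero
    rwa [(hφ 0 h0).deriv] at h1
  by_contra hc
  push_neg at hc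
  have hsl : Filter.Tendsto (slope ψ 0) (nhdsWithin 0 (Set.Ioi 0)) (nhds c) :=
    (hasDerivAt_iff_tendsto_slope.1 hψ).mono_left
      (nhdsWithin_mono 0 (fun t ht => ne_of_gt ht))
  have hev : ∀ᶠ t in nhdsWithin 0 (Set.Ioi 0), slope ψ 0 t < c/2 :=
    hsl.eventually (gt_mem_nhds (by linarith))
  obtain ⟨b, hb, hsub⟩ := mem_nhdsGT_iff_exists_Ioo_subset.1 hev
  have hb0 : (0:ℝ) < b := hb
  set r : ℝ := min b ε / 2 with hr
  have hr0 : 0 < r := by positivity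
  have hrb : r < b := by
    have := min_le_left b ε; simp only [hr]; linarith
  have hrε : r < ε := by
    have := min_le_right b ε; simp only [hr]; linarith
  have hIcc : Set.Icc (0:ℝ) r ⊆ Set.Ioo (-ε) ε := by
    intro t ht
    exact ⟨by linarith [ht.1], by linarith [ht.2]⟩
  have hanti : StrictAntiOn φ (Set.Icc 0 r) := by
    apply strictAntiOn_of_deriv_neg (convex_Icc _ _)
    · exact fun t ht => (hφ t (hIcc ht)).continuousAt.continuousWithinAt
    · intro t ht
      rw [interior_Icc] at ht
      rw [(hφ t (hIcc ⟨ht.1.le, ht.2.le⟩)).deriv]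
      have htb : t ∈ Set.Ioo (0:ℝ) b := ⟨ht.1, by linarith [ht.2]⟩
      have hst : slope ψ 0 t < c / 2 := hsub htb
      rw [slope_def_field, hψ0] at hst
      have hneg : ψ t / t < 0 := by
        have h2 : (ψ t - 0) / (t - 0) = ψ t / t := by ring_nf
        rw [h2] at hst; linarith
      by_contra hge
      push_neg at hge
      exact absurd (div_nonneg hge ht.1.le) (not_le.2 hneg)
  have := hanti (Set.left_mem_Icc.2 hr0.le) (Set.right_mem_Icc.2 hr0.le) hr0
  have hmin' := hmin r ⟨by linarith, hrε⟩
  linarith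

set_option maxHeartbeats 1600000 in
/-- Contact analysis lemma (Lemma 3.1), case `α ∈ (0,1)`: if the radially symmetric,
radially non-increasing barrier `U` touches the solution `u` of the viscous approximation
from above at `(t_c,x_c)` with `‖x_c‖ > 1`, then at the contact point
`∂_t U ≤ ∇U·G₀(V) + U L(V) + δ ΔU + e` with
`e = ‖∇U‖ (I⁺_out(V) − I⁺_out(v)) ≥ 0`, where `v = u^{m−1}`, `V = U^{m−1}` and `γ > 0`
satisfies `γ ‖∇U(t_c,x_c)‖ ≤ U(t_c,x_c)`. -/
theorem contact_analysis_alpha_lt_one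
    (d : ℕ) (hd : 1 ≤ d) (α m δ : ℝ) (hα0 : 0 < α) (hα1 : α < 1) (hm : 1 < m)
    (hδ : 0 ≤ δ)
    (u : ℝ → EuclideanSpace ℝ (Fin d) → ℝ)
    (hunn : ∀ t x, 0 ≤ u t x) (hub : ∃ M, ∀ t x, u t x ≤ M)
    (hut : ∀ x, ContDiffOn ℝ 1 (fun t => u t x) (Set.Ici 0))
    (hux : ∀ t : ℝ, 0 ≤ t → ContDiff ℝ 2 (u t))
    (huG : ∀ t : ℝ, 0 ≤ t → ∀ x, Integrable (fun z : EuclideanSpace ℝ (Fin d) =>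
      (u t (x + z) ^ (m - 1) * ‖z‖ ^ (-((d : ℝ) + α))) • z))
    (huL : ∀ t : ℝ, 0 ≤ t → ∀ x, Integrable (fun z : EuclideanSpace ℝ (Fin d) =>
      (u t (x + z) ^ (m - 1) + u t (x - z) ^ (m - 1) - 2 * u t x ^ (m - 1))
        * ‖z‖ ^ (-((d : ℝ) + α))))
    (hueq : ∀ t : ℝ, 0 < t → ∀ x,
      deriv (fun s => u s x) t
        = (inner ℝ (gradient (u t) x) (fracGrad0 d α (fun y => u t y ^ (m - 1)) x) : ℝ)
          + u t x * fracLap d α (fun y => u t y ^ (m - 1)) x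
          + δ * lap d (u t) x)
    (U : ℝ → EuclideanSpace ℝ (Fin d) → ℝ)
    (hUnn : ∀ t x, 0 < t → 0 ≤ U t x)
    (hUrad : ∀ t : ℝ, 0 < t → ∀ x y : EuclideanSpace ℝ (Fin d),
      ‖x‖ = ‖y‖ → U t x = U t y)
    (hUmono : ∀ t : ℝ, 0 < t → ∀ x y : EuclideanSpace ℝ (Fin d),
      ‖x‖ ≤ ‖y‖ → U t y ≤ U t x)
    (hUC2 : ContDiffOn ℝ 2 (fun p : ℝ × EuclideanSpace ℝ (Fin d) => U p.1 p.2)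
      (Set.Ioi (0 : ℝ) ×ˢ {x : EuclideanSpace ℝ (Fin d) | 1 < ‖x‖}))
    (tc : ℝ) (htc : 0 < tc) (xc : EuclideanSpace ℝ (Fin d)) (hxc : 1 < ‖xc‖)
    (hVG : Integrable (fun z : EuclideanSpace ℝ (Fin d) =>
      (U tc (xc + z) ^ (m - 1) * ‖z‖ ^ (-((d : ℝ) + α))) • z))
    (hVL : Integrable (fun z : EuclideanSpace ℝ (Fin d) =>
      (U tc (xc + z) ^ (m - 1) + U tc (xc - z) ^ (m - 1) - 2 * U tc xc ^ (m - 1))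
        * ‖z‖ ^ (-((d : ℝ) + α))))
    (htouch : ∀ t x, 0 < t → t ≤ tc → u t x ≤ U t x)
    (hcontact : u tc xc = U tc xc)
    (γ : ℝ) (hγ : 0 < γ) (hγle : γ * ‖gradient (U tc) xc‖ ≤ U tc xc) :
    deriv (fun s => U s xc) tc
      ≤ (inner ℝ (gradient (U tc) xc)
            (fracGrad0 d α (fun y => U tc y ^ (m - 1)) xc) : ℝ)
        + U tc xc * fracLap d α (fun y => U tc y ^ (m - 1)) xc
        + δ * lap d (U tc) xc
        + ‖gradient (U tc) xc‖
          * (IoutPlus0 d α γ xc (fun y => U tc y ^ (m - 1))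
             - IoutPlus0 d α γ xc (fun y => u tc y ^ (m - 1))) ∧
    0 ≤ ‖gradient (U tc) xc‖
          * (IoutPlus0 d α γ xc (fun y => U tc y ^ (m - 1))
             - IoutPlus0 d α γ xc (fun y => u tc y ^ (m - 1))) := by
  classical
  have htc' : (0:ℝ) ≤ tc := htc.le
  have hm1 : (0:ℝ) ≤ m - 1 := by linarith
  have hxcpos : (0:ℝ) < ‖xc‖ := lt_trans one_pos hxc
  have hxc0 : ‖xc‖ ≠ 0 := hxcpos.ne'
  set xh : EuclideanSpace ℝ (Fin d) := ‖xc‖⁻¹ • xc with hxhdef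
  have hxh : ‖xh‖ = 1 := by
    rw [hxhdef, norm_smul, norm_inv, norm_norm]
    field_simp
  set S : Set (EuclideanSpace ℝ (Fin d)) := {x | 1 < ‖x‖} with hSdef
  have hS : IsOpen S := isOpen_lt continuous_const continuous_norm
  have hxcS : xc ∈ S := hxc
  -- smoothness of slices
  have hUx : ContDiffOn ℝ 2 (U tc) S := by
    have hcomp : ContDiff ℝ 2
        (fun x : EuclideanSpace ℝ (Fin d) => ((tc, x) : ℝ × EuclideanSpace ℝ (Fin d))) :=
      contDiff_const.prodMk contDiff_id
    exact hUC2.comp hcomp.contDiffOn (fun x hx => ⟨htc, hx⟩)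
  have hUt : ContDiffOn ℝ 2 (fun t => U t xc) (Set.Ioi 0) := by
    have hcomp : ContDiff ℝ 2
        (fun t : ℝ => ((t, xc) : ℝ × EuclideanSpace ℝ (Fin d))) :=
      contDiff_id.prodMk contDiff_const
    exact hUC2.comp hcomp.contDiffOn (fun t ht => ⟨ht, hxcS⟩)
  have hUxd : DifferentiableAt ℝ (U tc) xc :=
    (hUx.contDiffAt (hS.mem_nhds hxcS)).differentiableAt (by norm_num)
  have huxC : ContDiff ℝ 2 (u tc) := hux tc htc'
  have huxd : DifferentiableAt ℝ (u tc) xc :=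
    (huxC.differentiable (by norm_num)).differentiableAt
  -- gradient direction
  set c : ℝ := fderiv ℝ (U tc) xc xh with hcdef
  have hsmul_xh : ‖xc‖ • xh = xc := smul_inv_smul₀ hxc0 xc
  set F : ℝ → ℝ := fun r => U tc (r • xh) with hFdef
  have hFd : HasDerivAt F c ‖xc‖ := by
    have hsm : HasDerivAt (fun r : ℝ => r • xh) xh ‖xc‖ := by
      simpa using (hasDerivAt_id (‖xc‖)).smul_const xh
    have h2 : HasFDerivAt (U tc) (fderiv ℝ (U tc) xc)
        ((fun r : ℝ => r • xh) ‖xc‖) := by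
      simpa [hsmul_xh] using hUxd.hasFDerivAt
    exact h2.comp_hasDerivAt _ hsm
  have hc : c ≤ 0 := by
    apply deriv_nonpos_of_right_max hFd
    filter_upwards [self_mem_nhdsWithin] with r (hr : ‖xc‖ < r)
    have hrpos : 0 < r := lt_trans hxcpos hr
    have h1 : ‖xc‖ ≤ ‖r • xh‖ := by
      rw [norm_smul, hxh, mul_one, Real.norm_eq_abs, abs_of_pos hrpos]
      exact hr.le
    have h2 := hUmono tc htc xc (r • xh) h1
    have h3 : F ‖xc‖ = U tc xc := by rw [hFdef]; simp [hsmul_xh]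
    rw [h3]
    exact h2
  have hnormd : HasFDerivAt (fun x : EuclideanSpace ℝ (Fin d) => ‖x‖)
      (innerSL ℝ xh) xc := by
    have h1 : HasFDerivAt (fun x : EuclideanSpace ℝ (Fin d) => ‖x‖^2)
        (2 • (innerSL ℝ xc)) xc := (hasStrictFDerivAt_norm_sq xc).hasFDerivAt
    have h2 : HasDerivAt Real.sqrt (1 / (2 * Real.sqrt (‖xc‖^2))) (‖xc‖^2) :=
      Real.hasDerivAt_sqrt (by positivity)
    have h3 := h2.comp_hasFDerivAt xc h1
    simp only [Function.comp_def] at h3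
    have h4 : (fun x : EuclideanSpace ℝ (Fin d) => Real.sqrt (‖x‖^2))
        = fun x : EuclideanSpace ℝ (Fin d) => ‖x‖ := by
      funext x; rw [Real.sqrt_sq (norm_nonneg x)]
    rw [h4] at h3
    refine HasFDerivAt.congr_fderiv h3 (Eq.symm ?_)
    refine ContinuousLinearMap.ext fun w => ?_
    rw [Real.sqrt_sq (norm_nonneg xc)]
    simp only [innerSL_apply_apply, ContinuousLinearMap.coe_smul', Pi.smul_apply,
      innerSL_apply_apply, smul_eq_mul, hxhdef, real_inner_smul_left]
    field_simp
    ring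
  have hUfd : HasFDerivAt (U tc) (c • innerSL ℝ xh) xc := by
    have h1 := hFd.comp_hasFDerivAt xc hnormd
    have h2 : (F ∘ fun x : EuclideanSpace ℝ (Fin d) => ‖x‖) = U tc := by
      funext x
      show U tc (‖x‖ • xh) = U tc x
      apply hUrad tc htc
      rw [norm_smul, hxh, mul_one, Real.norm_eq_abs, abs_of_nonneg (norm_nonneg x)]
    rwa [h2] at h1
  have hgradU : gradient (U tc) xc = c • xh := by
    apply HasGradientAt.gradient
    rw [hasGradientAt_iff_hasFDerivAt]
    refine HasFDerivAt.congr_fderiv hUfd (Eq.symm ?_)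
    refine ContinuousLinearMap.ext fun w => ?_
    rw [InnerProductSpace.toDual_apply_apply]
    simp only [real_inner_smul_left, ContinuousLinearMap.coe_smul', Pi.smul_apply,
      innerSL_apply_apply, smul_eq_mul]
  set P : ℝ := ‖gradient (U tc) xc‖ with hPdef
  have hPc : P = -c := by
    rw [hPdef, hgradU, norm_smul, hxh, mul_one, Real.norm_eq_abs, abs_of_nonpos hc]
  have hP0 : (0:ℝ) ≤ P := norm_nonneg _
  -- gradient of u equals gradient of U at contact
  have hfeq : fderiv ℝ (u tc) xc = fderiv ℝ (U tc) xc := by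
    have hlocmin : IsLocalMin (fun y => U tc y - u tc y) xc := by
      refine Filter.Eventually.of_forall (fun y => ?_)
      have h1 := htouch tc y htc le_rfl
      simp only [hcontact]
      linarith
    have h0 := hlocmin.fderiv_eq_zero
    rw [fderiv_fun_sub hUxd huxd, sub_eq_zero] at h0
    exact h0.symm
  have hgradu : gradient (u tc) xc = gradient (U tc) xc := by
    unfold gradient
    rw [hfeq]
  -- time derivative comparison
  have hUtd : DifferentiableAt ℝ (fun s => U s xc) tc :=
    (hUt.contDiffAt (isOpen_Ioi.mem_nhds htc)).differentiableAt (by norm_num)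
  have hutd : DifferentiableAt ℝ (fun s => u s xc) tc := by
    have h1 : Set.Ici (0:ℝ) ∈ nhds tc :=
      Filter.mem_of_superset (isOpen_Ioi.mem_nhds htc) Set.Ioi_subset_Ici_self
    exact (((hut xc) tc htc').differentiableWithinAt (by norm_num)).differentiableAt h1
  have hstep1 : deriv (fun s => U s xc) tc ≤ deriv (fun s => u s xc) tc := by
    have hdiff : HasDerivAt (fun s => U s xc - u s xc)
        (deriv (fun s => U s xc) tc - deriv (fun s => u s xc) tc) tc :=
      hUtd.hasDerivAt.sub hutd.hasDerivAt
    have hkey := deriv_nonpos_of_left_min hdiff ?_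
    · linarith
    · have hmem : Set.Ioi (0:ℝ) ∈ nhdsWithin tc (Set.Iio tc) :=
        mem_nhdsWithin_of_mem_nhds (isOpen_Ioi.mem_nhds htc)
      filter_upwards [hmem, self_mem_nhdsWithin] with t (ht0 : 0 < t) (htlt : t < tc)
      have h1 := htouch t xc ht0 htlt.le
      simp only [hcontact]
      linarith
  -- Laplacian comparison
  have hlap : lap d (u tc) xc ≤ lap d (U tc) xc := by
    unfold lap
    apply Finset.sum_le_sum
    intro i _
    set e : EuclideanSpace ℝ (Fin d) := EuclideanSpace.single i (1:ℝ) with hedef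
    have he1 : ‖e‖ = 1 := by rw [hedef, EuclideanSpace.norm_single]; norm_num
    obtain ⟨ε, hε, hball⟩ := Metric.isOpen_iff.1 hS xc hxcS
    have hline : ∀ t : ℝ, t ∈ Set.Ioo (-ε) ε → xc + t • e ∈ S := by
      intro t ht
      apply hball
      rw [Metric.mem_ball, dist_eq_norm]
      simp only [add_sub_cancel_left]
      rw [norm_smul, he1, mul_one, Real.norm_eq_abs, abs_lt]
      exact ⟨ht.1, ht.2⟩
    have hlm : ∀ t : ℝ, HasDerivAt (fun s : ℝ => xc + s • e) e t := by
      intro t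
      simpa using ((hasDerivAt_id t).smul_const e).const_add xc
    set DU : EuclideanSpace ℝ (Fin d) → ℝ := fun y => fderiv ℝ (U tc) y e with hDU
    set Du : EuclideanSpace ℝ (Fin d) → ℝ := fun y => fderiv ℝ (u tc) y e with hDu
    have hUdiffS : ∀ y ∈ S, DifferentiableAt ℝ (U tc) y := fun y hy =>
      (hUx.contDiffAt (hS.mem_nhds hy)).differentiableAt (by norm_num)
    have hudiff : ∀ y, DifferentiableAt ℝ (u tc) y := fun y =>
      (huxC.differentiable (by norm_num)).differentiableAt
    have hDUc : ContDiffOn ℝ 1 DU S :=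
      (hUx.fderiv_of_isOpen hS (by norm_num)).clm_apply contDiffOn_const
    have hDuc : ContDiff ℝ 1 Du :=
      (huxC.fderiv_right (by norm_num)).clm_apply contDiff_const
    have hDUd : DifferentiableAt ℝ DU xc :=
      (hDUc.contDiffAt (hS.mem_nhds hxcS)).differentiableAt one_ne_zero
    have hDud : DifferentiableAt ℝ Du xc :=
      (hDuc.differentiable one_ne_zero).differentiableAt
    have h00 : xc + (0:ℝ) • e = xc := by simp
    have key := second_deriv_nonneg_of_min
      (φ := fun t => U tc (xc + t • e) - u tc (xc + t • e))
      (ψ := fun t => DU (xc + t • e) - Du (xc + t • e))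
      (ε := ε) (c := fderiv ℝ DU xc e - fderiv ℝ Du xc e) hε ?_ ?_ ?_
    · linarith [key]
    · intro t ht
      have hU' : HasDerivAt (fun s : ℝ => U tc (xc + s • e)) (DU (xc + t • e)) t := by
        have hfd : HasFDerivAt (U tc) (fderiv ℝ (U tc) (xc + t • e))
            ((fun s : ℝ => xc + s • e) t) := (hUdiffS _ (hline t ht)).hasFDerivAt
        exact hfd.comp_hasDerivAt t (hlm t)
      have hu' : HasDerivAt (fun s : ℝ => u tc (xc + s • e)) (Du (xc + t • e)) t := by
        have hfd : HasFDerivAt (u tc) (fderiv ℝ (u tc) (xc + t • e))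
            ((fun s : ℝ => xc + s • e) t) := (hudiff _).hasFDerivAt
        exact hfd.comp_hasDerivAt t (hlm t)
      exact hU'.sub hu'
    · have hU2 : HasDerivAt (fun s : ℝ => DU (xc + s • e)) (fderiv ℝ DU xc e) 0 := by
        have hfd : HasFDerivAt DU (fderiv ℝ DU xc) ((fun s : ℝ => xc + s • e) 0) := by
          simp only [zero_smul, add_zero]
          exact hDUd.hasFDerivAt
        exact hfd.comp_hasDerivAt 0 (hlm 0)
      have hu2 : HasDerivAt (fun s : ℝ => Du (xc + s • e)) (fderiv ℝ Du xc e) 0 := by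
        have hfd : HasFDerivAt Du (fderiv ℝ Du xc) ((fun s : ℝ => xc + s • e) 0) := by
          simp only [zero_smul, add_zero]
          exact hDud.hasFDerivAt
        exact hfd.comp_hasDerivAt 0 (hlm 0)
      exact hU2.sub hu2
    · intro t ht
      simp only [h00]
      have h1 := htouch tc (xc + t • e) htc le_rfl
      simp only [hcontact]
      linarith
  -- setup for the integral estimates
  have hk0 : ∀ z : EuclideanSpace ℝ (Fin d), (0:ℝ) ≤ ‖z‖ ^ (-((d:ℝ) + α)) :=
    fun z => Real.rpow_nonneg (norm_nonneg z) _
  have hvV : ∀ y, u tc y ^ (m - 1) ≤ U tc y ^ (m - 1) := fun y =>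
    Real.rpow_le_rpow (hunn tc y) (htouch tc y htc le_rfl) hm1
  have hvv0 : ∀ y, 0 ≤ u tc y ^ (m - 1) := fun y => Real.rpow_nonneg (hunn tc y) _
  have hc₀0 : 0 ≤ U tc xc := hUnn tc xc htc
  have hc2 : u tc xc ^ (m - 1) = U tc xc ^ (m - 1) := by rw [hcontact]
  set A : Set (EuclideanSpace ℝ (Fin d)) :=
    {y | γ ≤ ‖y‖ ∧ 0 ≤ (inner ℝ y xh : ℝ)} with hAdef
  have hAm : MeasurableSet A := by
    rw [hAdef, Set.setOf_and]
    exact ((isClosed_le continuous_const continuous_norm).inter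
      (isClosed_le continuous_const
        (Continuous.inner continuous_id continuous_const))).measurableSet
  -- integrable pieces
  have hIVs : Integrable (fun z : EuclideanSpace ℝ (Fin d) =>
      U tc (xc + z) ^ (m - 1) * ‖z‖ ^ (-((d:ℝ) + α)) * (inner ℝ xh z : ℝ)) := by
    have h1 := (innerSL ℝ xh).integrable_comp hVG
    simpa only [innerSL_apply_apply, real_inner_smul_right] using h1
  have hIvs : Integrable (fun z : EuclideanSpace ℝ (Fin d) =>
      u tc (xc + z) ^ (m - 1) * ‖z‖ ^ (-((d:ℝ) + α)) * (inner ℝ xh z : ℝ)) := by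
    have h1 := (innerSL ℝ xh).integrable_comp (huG tc htc' xc)
    simpa only [innerSL_apply_apply, real_inner_smul_right] using h1
  have hILd : Integrable (fun z : EuclideanSpace ℝ (Fin d) =>
      ((U tc (xc + z) ^ (m - 1) - u tc (xc + z) ^ (m - 1)) + (U tc (xc - z) ^ (m - 1) - u tc (xc - z) ^ (m - 1))) * ‖z‖ ^ (-((d:ℝ) + α))) := by
    have h1 := hVL.sub (huL tc htc' xc)
    refine h1.congr (Filter.Eventually.of_forall (fun z => ?_))
    simp only [Pi.sub_apply]
    rw [hc2]
    ring
  have hRints : Integrable (fun z : EuclideanSpace ℝ (Fin d) =>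
      P * ((U tc (xc + z) ^ (m - 1) - u tc (xc + z) ^ (m - 1)) * (inner ℝ z xh : ℝ) * ‖z‖ ^ (-((d:ℝ) + α)))) := by
    have h1 := (hIVs.sub hIvs).const_mul P
    refine h1.congr (Filter.Eventually.of_forall (fun z => ?_))
    simp only [Pi.sub_apply]
    have h8 : (inner ℝ z xh : ℝ) = inner ℝ xh z := real_inner_comm _ _
    rw [h8]; ring
  -- pointwise master inequality
  have hpt : ∀ z : EuclideanSpace ℝ (Fin d),
      (P * (U tc (xc + z) ^ (m - 1) * ‖z‖ ^ (-((d:ℝ) + α)) * (inner ℝ xh z : ℝ))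
        - P * (u tc (xc + z) ^ (m - 1) * ‖z‖ ^ (-((d:ℝ) + α)) * (inner ℝ xh z : ℝ)))
        - U tc xc * (((U tc (xc + z) ^ (m - 1) - u tc (xc + z) ^ (m - 1)) + (U tc (xc - z) ^ (m - 1) - u tc (xc - z) ^ (m - 1))) * ‖z‖ ^ (-((d:ℝ) + α)))
      ≤ A.indicator (fun z =>
          P * ((U tc (xc + z) ^ (m - 1) - u tc (xc + z) ^ (m - 1)) * (inner ℝ z xh : ℝ) * ‖z‖ ^ (-((d:ℝ) + α)))) z := by
    intro z
    have hgz : (0:ℝ) ≤ U tc (xc + z) ^ (m - 1) - u tc (xc + z) ^ (m - 1) := sub_nonneg.2 (hvV _)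
    have hgz' : (0:ℝ) ≤ U tc (xc - z) ^ (m - 1) - u tc (xc - z) ^ (m - 1) := sub_nonneg.2 (hvV _)
    have hkz := hk0 z
    have hCS : (inner ℝ xh z : ℝ) ≤ ‖z‖ := by
      have h1 := real_inner_le_norm xh z
      rwa [hxh, one_mul] at h1
    have h8 : (inner ℝ z xh : ℝ) = inner ℝ xh z := real_inner_comm _ _
    by_cases hzA : z ∈ A
    · rw [Set.indicator_of_mem hzA, h8]
      nlinarith [mul_nonneg (mul_nonneg hgz' hkz) hc₀0,
        mul_nonneg (mul_nonneg hgz hkz) hc₀0]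
    · rw [Set.indicator_of_notMem hzA]
      rcases le_or_gt 0 (inner ℝ xh z : ℝ) with hin | hin
      · have hzn : ‖z‖ < γ := by
          by_contra hh
          push_neg at hh
          exact hzA ⟨hh, by rw [h8]; exact hin⟩
        have h1 : P * (inner ℝ xh z : ℝ) ≤ U tc xc := by
          have h2 : (inner ℝ xh z : ℝ) ≤ γ := le_trans hCS hzn.le
          calc P * (inner ℝ xh z : ℝ) ≤ P * γ := mul_le_mul_of_nonneg_left h2 hP0
            _ = γ * P := mul_comm _ _
            _ ≤ U tc xc := hγle
        nlinarith [mul_nonneg (mul_nonneg hgz' hkz) hc₀0,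
          mul_nonneg (mul_nonneg hgz hkz) (sub_nonneg.2 h1)]
      · nlinarith [mul_nonneg (mul_nonneg hgz hkz) hP0,
          mul_nonneg (mul_nonneg hgz' hkz) hc₀0,
          mul_nonneg (mul_nonneg hgz hkz) hc₀0,
          mul_nonneg (mul_nonneg (mul_nonneg hgz hkz) hP0) (neg_nonneg.2 hin.le)]
  -- master integral inequality
  have hlint : Integrable (fun z : EuclideanSpace ℝ (Fin d) =>
      (P * (U tc (xc + z) ^ (m - 1) * ‖z‖ ^ (-((d:ℝ) + α)) * (inner ℝ xh z : ℝ))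
        - P * (u tc (xc + z) ^ (m - 1) * ‖z‖ ^ (-((d:ℝ) + α)) * (inner ℝ xh z : ℝ)))
        - U tc xc * (((U tc (xc + z) ^ (m - 1) - u tc (xc + z) ^ (m - 1)) + (U tc (xc - z) ^ (m - 1) - u tc (xc - z) ^ (m - 1))) * ‖z‖ ^ (-((d:ℝ) + α)))) :=
    (((hIVs.const_mul P).sub (hIvs.const_mul P)).sub (hILd.const_mul (U tc xc))).congr
      (Filter.Eventually.of_forall fun z => rfl)
  have hmaster := integral_mono hlint (hRints.indicator hAm) hpt
  rw [integral_indicator hAm] at hmaster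
  -- identify the integrals
  have hGV : (inner ℝ (gradient (U tc) xc)
        (fracGrad0 d α (fun y => U tc y ^ (m - 1)) xc) : ℝ)
      = -P * ∫ z : EuclideanSpace ℝ (Fin d), U tc (xc + z) ^ (m - 1) * ‖z‖ ^ (-((d:ℝ) + α)) * (inner ℝ xh z : ℝ) := by
    unfold fracGrad0
    rw [← integral_inner hVG, ← integral_const_mul]
    congr 1
    funext z
    rw [hgradU, real_inner_smul_left, real_inner_smul_right]
    have h9 : c = -P := by rw [hPc]; ring
    rw [h9]
  have hGv : (inner ℝ (gradient (U tc) xc)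
        (fracGrad0 d α (fun y => u tc y ^ (m - 1)) xc) : ℝ)
      = -P * ∫ z : EuclideanSpace ℝ (Fin d), u tc (xc + z) ^ (m - 1) * ‖z‖ ^ (-((d:ℝ) + α)) * (inner ℝ xh z : ℝ) := by
    unfold fracGrad0
    rw [← integral_inner (huG tc htc' xc), ← integral_const_mul]
    congr 1
    funext z
    rw [hgradU, real_inner_smul_left, real_inner_smul_right]
    have h9 : c = -P := by rw [hPc]; ring
    rw [h9]
  have hLdiff : fracLap d α (fun y => U tc y ^ (m - 1)) xc
        - fracLap d α (fun y => u tc y ^ (m - 1)) xc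
      = ∫ z : EuclideanSpace ℝ (Fin d), ((U tc (xc + z) ^ (m - 1) - u tc (xc + z) ^ (m - 1)) + (U tc (xc - z) ^ (m - 1) - u tc (xc - z) ^ (m - 1))) * ‖z‖ ^ (-((d:ℝ) + α)) := by
    unfold fracLap
    rw [← integral_sub hVL (huL tc htc' xc)]
    congr 1
    funext z
    rw [hc2]
    ring
  have hVAint : Integrable (fun y : EuclideanSpace ℝ (Fin d) =>
      U tc (xc + y) ^ (m - 1) * (inner ℝ y xh : ℝ) * ‖y‖ ^ (-((d:ℝ) + α))) (volume.restrict A) := by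
    refine (hIVs.congr (Filter.Eventually.of_forall (fun z => ?_))).restrict
    have h8 : (inner ℝ z xh : ℝ) = inner ℝ xh z := real_inner_comm _ _
    rw [h8]; ring
  have hvAint : Integrable (fun y : EuclideanSpace ℝ (Fin d) =>
      u tc (xc + y) ^ (m - 1) * (inner ℝ y xh : ℝ) * ‖y‖ ^ (-((d:ℝ) + α))) (volume.restrict A) := by
    refine (hIvs.congr (Filter.Eventually.of_forall (fun z => ?_))).restrict
    have h8 : (inner ℝ z xh : ℝ) = inner ℝ xh z := real_inner_comm _ _
    rw [h8]; ring
  have hIout : IoutPlus0 d α γ xc (fun y => U tc y ^ (m - 1))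
        - IoutPlus0 d α γ xc (fun y => u tc y ^ (m - 1))
      = ∫ z in A, (U tc (xc + z) ^ (m - 1) - u tc (xc + z) ^ (m - 1)) * (inner ℝ z xh : ℝ) * ‖z‖ ^ (-((d:ℝ) + α)) := by
    unfold IoutPlus0
    rw [← hxhdef, ← hAdef, ← integral_sub hVAint hvAint]
    congr 1
    funext z
    ring
  have hIoutnn : 0 ≤ IoutPlus0 d α γ xc (fun y => U tc y ^ (m - 1))
        - IoutPlus0 d α γ xc (fun y => u tc y ^ (m - 1)) := by
    rw [hIout]
    refine setIntegral_nonneg hAm (fun z hz => ?_)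
    have hgz : (0:ℝ) ≤ U tc (xc + z) ^ (m - 1) - u tc (xc + z) ^ (m - 1) := sub_nonneg.2 (hvV _)
    exact mul_nonneg (mul_nonneg hgz hz.2) (hk0 z)
  have hpos : 0 ≤ P * (IoutPlus0 d α γ xc (fun y => U tc y ^ (m - 1))
        - IoutPlus0 d α γ xc (fun y => u tc y ^ (m - 1))) :=
    mul_nonneg hP0 hIoutnn
  have hkey : (inner ℝ (gradient (U tc) xc)
        (fracGrad0 d α (fun y => u tc y ^ (m - 1)) xc) : ℝ)
        + U tc xc * fracLap d α (fun y => u tc y ^ (m - 1)) xc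
      ≤ (inner ℝ (gradient (U tc) xc)
            (fracGrad0 d α (fun y => U tc y ^ (m - 1)) xc) : ℝ)
        + U tc xc * fracLap d α (fun y => U tc y ^ (m - 1)) xc
        + P * (IoutPlus0 d α γ xc (fun y => U tc y ^ (m - 1))
             - IoutPlus0 d α γ xc (fun y => u tc y ^ (m - 1))) := by
    have h1 : ∫ z : EuclideanSpace ℝ (Fin d),
        ((P * (U tc (xc + z) ^ (m - 1) * ‖z‖ ^ (-((d:ℝ) + α)) * (inner ℝ xh z : ℝ))
          - P * (u tc (xc + z) ^ (m - 1) * ‖z‖ ^ (-((d:ℝ) + α)) * (inner ℝ xh z : ℝ)))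
          - U tc xc * (((U tc (xc + z) ^ (m - 1) - u tc (xc + z) ^ (m - 1)) + (U tc (xc - z) ^ (m - 1) - u tc (xc - z) ^ (m - 1))) * ‖z‖ ^ (-((d:ℝ) + α))))
        = (P * ∫ z : EuclideanSpace ℝ (Fin d), U tc (xc + z) ^ (m - 1) * ‖z‖ ^ (-((d:ℝ) + α)) * (inner ℝ xh z : ℝ))
          - (P * ∫ z : EuclideanSpace ℝ (Fin d), u tc (xc + z) ^ (m - 1) * ‖z‖ ^ (-((d:ℝ) + α)) * (inner ℝ xh z : ℝ))
          - U tc xc * ∫ z : EuclideanSpace ℝ (Fin d), ((U tc (xc + z) ^ (m - 1) - u tc (xc + z) ^ (m - 1)) + (U tc (xc - z) ^ (m - 1) - u tc (xc - z) ^ (m - 1))) * ‖z‖ ^ (-((d:ℝ) + α)) := by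
      have hsub1 : Integrable (fun z : EuclideanSpace ℝ (Fin d) =>
          P * (U tc (xc + z) ^ (m - 1) * ‖z‖ ^ (-((d:ℝ) + α)) * (inner ℝ xh z : ℝ))
          - P * (u tc (xc + z) ^ (m - 1) * ‖z‖ ^ (-((d:ℝ) + α)) * (inner ℝ xh z : ℝ))) :=
        ((hIVs.const_mul P).sub (hIvs.const_mul P)).congr
          (Filter.Eventually.of_forall fun z => rfl)
      rw [integral_sub hsub1 (hILd.const_mul (U tc xc)),
        integral_sub (hIVs.const_mul P) (hIvs.const_mul P),
        integral_const_mul, integral_const_mul, integral_const_mul]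
    have h2 : ∫ z in A, P * ((U tc (xc + z) ^ (m - 1) - u tc (xc + z) ^ (m - 1)) * (inner ℝ z xh : ℝ) * ‖z‖ ^ (-((d:ℝ) + α)))
        = P * ∫ z in A, (U tc (xc + z) ^ (m - 1) - u tc (xc + z) ^ (m - 1)) * (inner ℝ z xh : ℝ) * ‖z‖ ^ (-((d:ℝ) + α)) :=
      integral_const_mul _ _
    rw [h1, h2] at hmaster
    rw [hGV, hGv]
    nlinarith [hmaster, hLdiff, hIout]
  constructor
  · have heq := hueq tc htc xc
    rw [hgradu, hcontact] at heq
    have h5 : δ * lap d (u tc) xc ≤ δ * lap d (U tc) xc :=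
      mul_le_mul_of_nonneg_left hlap hδ
    calc deriv (fun s => U s xc) tc ≤ deriv (fun s => u s xc) tc := hstep1
      _ = (inner ℝ (gradient (U tc) xc)
            (fracGrad0 d α (fun y => u tc y ^ (m - 1)) xc) : ℝ)
          + U tc xc * fracLap d α (fun y => u tc y ^ (m - 1)) xc
          + δ * lap d (u tc) xc := heq
      _ ≤ _ := by
          rw [hPdef] at hkey hpos ⊢
          linarith
  · rw [hPdef] at hpos
    exact hpos
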